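/- Let ξ ∈ 𝓕̄ and let ε be a real number with 0 < ε ≤ √3/(3|ξ|+2). Let τ ∈ ℍ and suppose γ = [[a,b],[c,d]] ∈ SL₂(ℤ) is such that γτ ∈ 𝓕̄ and |γτ − ξ| ≤ ε. Then there exists ν ∈ {±1} such that |a² + 2ν|Re(ξ)|ac + |ξ|²c² − Im(ξ)/Im(τ)| ≤ 7·((4|ξ|+1)/√3)·|ξ|²·ε^{1/2}/Im(τ). Moreover max{a², c²} ≤ ((4|ξ|+1)/√3)·(1/Im(τ)), |d| ≤ |c||Re(τ)| + (4|ξ|+1)/√3, and |b| ≤ |a||Re(τ)| + (4|ξ|+1)/√3. -/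

import Mathlib

open Real

/-- The closed standard fundamental domain
`{τ ∈ ℍ : |Re τ| ≤ 1/2, |τ| ≥ 1}` viewed inside `ℂ`. -/
def inFD (z : ℂ) : Prop :=
  0 < z.im ∧ |z.re| ≤ 1 / 2 ∧ 1 ≤ ‖z‖

/-- The fractional linear (Möbius) action of an integer matrix `[[a,b],[c,d]]` on `ℂ`. -/
noncomputable def moebius (a b c d : ℤ) (τ : ℂ) : ℂ :=
  ((a : ℂ) * τ + (b : ℂ)) / ((c : ℂ) * τ + (d : ℂ))

private lemma aux_sq_le {x y : ℝ} (hx : 0 ≤ x) (hy : 0 ≤ y) (h : x ^ 2 ≤ y ^ 2) : x ≤ y := by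
  nlinarith

private lemma aux_abs_mul_le_max (x y : ℝ) : |x| * |y| ≤ max (x ^ 2) (y ^ 2) := by
  nlinarith [sq_nonneg (|x| - |y|), sq_abs x, sq_abs y,
    le_max_left (x ^ 2) (y ^ 2), le_max_right (x ^ 2) (y ^ 2)]

private lemma aux_le_sqrt_self {e : ℝ} (h0 : 0 ≤ e) (h1 : e ≤ 1) : e ≤ Real.sqrt e := by
  have hle : Real.sqrt e ≤ 1 := by
    rw [show (1 : ℝ) = Real.sqrt 1 by simp]
    exact Real.sqrt_le_sqrt h1
  nlinarith [Real.sqrt_nonneg e, Real.mul_self_sqrt h0]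

private lemma aux_r_poly {r : ℝ} (h : 1 ≤ r) : 2 ≤ 7 * r ^ 2 - 2 * r - 3 := by
  nlinarith

set_option maxHeartbeats 2000000 in
theorem matrix_entries_near_ellipse
    (ξ : ℂ) (hξ : inFD ξ) (ε : ℝ) (hε : 0 < ε)
    (hε' : ε ≤ Real.sqrt 3 / (3 * ‖ξ‖ + 2))
    (τ : ℂ) (hτ : 0 < τ.im)
    (a b c d : ℤ) (hdet : a * d - b * c = 1)
    (hFD : inFD (moebius a b c d τ))
    (hclose : ‖moebius a b c d τ - ξ‖ ≤ ε) :
    (∃ ν : ℝ, (ν = 1 ∨ ν = -1) ∧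
        |(a : ℝ) ^ 2 + 2 * ν * |ξ.re| * ((a : ℝ) * (c : ℝ))
            + (‖ξ‖) ^ 2 * (c : ℝ) ^ 2 - ξ.im / τ.im|
          ≤ 7 * ((4 * ‖ξ‖ + 1) / Real.sqrt 3) * (‖ξ‖) ^ 2
              * Real.sqrt ε / τ.im) ∧
    max ((a : ℝ) ^ 2) ((c : ℝ) ^ 2)
        ≤ (4 * ‖ξ‖ + 1) / Real.sqrt 3 * (1 / τ.im) ∧
    |(d : ℝ)| ≤ |(c : ℝ)| * |τ.re| + (4 * ‖ξ‖ + 1) / Real.sqrt 3 ∧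
    |(b : ℝ)| ≤ |(a : ℝ)| * |τ.re| + (4 * ‖ξ‖ + 1) / Real.sqrt 3 := by
  obtain ⟨hwim, hwre, hwabs⟩ := hFD
  set w := moebius a b c d τ with hw
  set r := ‖ξ‖ with hr
  set s := Real.sqrt 3 with hs
  have hs0 : 0 < s := Real.sqrt_pos.mpr (by norm_num)
  have hs2 : s ^ 2 = 3 := Real.sq_sqrt (by norm_num)
  have hs_le : s ≤ 2 := by nlinarith
  have hs_ge : 1 ≤ s := by nlinarith
  have hr1 : 1 ≤ r := hξ.2.2
  have hr0 : 0 < r := by linarith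
  -- ε is small
  have hε1 : ε ≤ s / 5 := by
    refine hε'.trans ?_
    exact div_le_div_of_nonneg_left hs0.le (by norm_num) (by linarith)
  have hε2 : ε ≤ 1 := by nlinarith
  have hεs : ε * s ≤ 3 / 5 := by nlinarith [mul_le_mul_of_nonneg_right hε1 hs0.le]
  -- denominator nonzero
  have hcd : ((c : ℂ) * τ + (d : ℂ)) ≠ 0 := by
    intro h
    have hw0 : w = 0 := by rw [hw, moebius, h, div_zero]
    rw [hw0] at hwim
    simp at hwim
  have hnD0 : 0 < Complex.normSq ((c : ℂ) * τ + (d : ℂ)) := Complex.normSq_pos.mpr hcd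
  have hdetR : (a : ℝ) * d - b * c = 1 := by exact_mod_cast hdet
  -- Im w * |cτ+d|² = Im τ
  have him : w.im * Complex.normSq ((c : ℂ) * τ + (d : ℂ)) = τ.im := by
    have e1 : ((a : ℂ) * τ + (b : ℂ)).im * ((c : ℂ) * τ + (d : ℂ)).re
        - ((a : ℂ) * τ + (b : ℂ)).re * ((c : ℂ) * τ + (d : ℂ)).im = τ.im := by
      simp only [Complex.add_re, Complex.add_im, Complex.mul_re, Complex.mul_im,
        Complex.intCast_re, Complex.intCast_im]
      linear_combination τ.im * hdetR
    rw [hw, moebius, Complex.div_im, div_sub_div_same, div_mul_cancel₀ _ hnD0.ne']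
    exact e1
  -- a - c·w = (cτ+d)⁻¹
  have hinv : (a : ℂ) - (c : ℂ) * w = ((c : ℂ) * τ + (d : ℂ))⁻¹ := by
    have hdetC : (a : ℂ) * d - b * c = 1 := by exact_mod_cast hdet
    rw [hw, moebius]
    field_simp
    linear_combination hdetC
  -- the key quadratic identity
  have hKey : (a : ℝ) ^ 2 - 2 * (a : ℝ) * (c : ℝ) * w.re
      + (c : ℝ) ^ 2 * Complex.normSq w = w.im / τ.im := by
    have h1 : Complex.normSq ((a : ℂ) - (c : ℂ) * w)
        = (Complex.normSq ((c : ℂ) * τ + (d : ℂ)))⁻¹ := by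
      rw [hinv, Complex.normSq_inv]
    have h2 : Complex.normSq ((a : ℂ) - (c : ℂ) * w)
        = (a : ℝ) ^ 2 - 2 * (a : ℝ) * (c : ℝ) * w.re + (c : ℝ) ^ 2 * Complex.normSq w := by
      simp only [Complex.normSq_apply, Complex.sub_re, Complex.sub_im, Complex.mul_re,
        Complex.mul_im, Complex.intCast_re, Complex.intCast_im]
      ring
    rw [← h2, h1, eq_div_iff hτ.ne', inv_mul_eq_div, div_eq_iff hnD0.ne']
    linarith [him]
  -- closeness facts
  have hwx : |w.re - ξ.re| ≤ ε := by
    have h1 : |(w - ξ).re| ≤ ‖w - ξ‖ := Complex.abs_re_le_norm _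
    rw [Complex.sub_re] at h1
    exact h1.trans hclose
  have hwy : |w.im - ξ.im| ≤ ε := by
    have h1 : |(w - ξ).im| ≤ ‖w - ξ‖ := Complex.abs_im_le_norm _
    rw [Complex.sub_im] at h1
    exact h1.trans hclose
  have hwa : |‖w‖ - r| ≤ ε := by
    have h1 : |‖w‖ - ‖ξ‖| ≤ ‖w - ξ‖ := abs_norm_sub_norm_le w ξ
    exact h1.trans hclose
  have habsw_ub : ‖w‖ ≤ r + ε := by
    have := abs_le.mp hwa
    linarith [this.2]
  have hwim_ub : w.im ≤ r + ε := by
    have h1 : w.im ≤ |w.im| := le_abs_self _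
    have h2 : |w.im| ≤ ‖w‖ := Complex.abs_im_le_norm w
    linarith
  -- Im w ≥ √3/2
  have hwre2 : w.re ^ 2 ≤ 1 / 4 := by
    have h := abs_le.mp hwre
    nlinarith [h.1, h.2]
  have hnsqw : 1 ≤ Complex.normSq w := by
    have h1 : (1 : ℝ) ≤ (‖w‖) ^ 2 := by nlinarith [hwabs]
    rwa [Complex.sq_norm] at h1
  have hnsqw_eq : Complex.normSq w = w.re ^ 2 + w.im ^ 2 := by
    rw [Complex.normSq_apply]; ring
  have hwim_lb : s / 2 ≤ w.im := by
    nlinarith [hwim, hnsqw, hnsqw_eq, hwre2]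
  -- bound on max(a², c²)
  have habc : 2 * (a : ℝ) * (c : ℝ) * w.re ≤ |(a : ℝ)| * |(c : ℝ)| := by
    calc 2 * (a : ℝ) * (c : ℝ) * w.re ≤ |2 * (a : ℝ) * (c : ℝ) * w.re| := le_abs_self _
      _ = 2 * |(a : ℝ)| * |(c : ℝ)| * |w.re| := by
          rw [abs_mul, abs_mul, abs_mul]; norm_num
      _ ≤ 2 * |(a : ℝ)| * |(c : ℝ)| * (1 / 2) := by
          apply mul_le_mul_of_nonneg_left hwre (by positivity)
      _ = |(a : ℝ)| * |(c : ℝ)| := by ring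
  have hstep : (a : ℝ) ^ 2 - |(a : ℝ)| * |(c : ℝ)| + (c : ℝ) ^ 2 ≤ w.im / τ.im := by
    have h1 : (c : ℝ) ^ 2 ≤ (c : ℝ) ^ 2 * Complex.normSq w := by
      nlinarith [hnsqw, sq_nonneg (c : ℝ)]
    linarith [hKey, habc]
  have ha34 : (3 / 4) * (a : ℝ) ^ 2 ≤ w.im / τ.im := by
    nlinarith [hstep, sq_nonneg (|(a : ℝ)| - 2 * |(c : ℝ)|), sq_abs (a : ℝ), sq_abs (c : ℝ)]
  have hc34 : (3 / 4) * (c : ℝ) ^ 2 ≤ w.im / τ.im := by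
    nlinarith [hstep, sq_nonneg (2 * |(a : ℝ)| - |(c : ℝ)|), sq_abs (a : ℝ), sq_abs (c : ℝ)]
  have hK1 : (4 / 3) * (r + ε) ≤ (4 * r + 1) / s := by
    rw [le_div_iff₀ hs0]
    nlinarith [hεs, mul_le_mul_of_nonneg_left hs_le hr0.le]
  have hmaxK : max ((a : ℝ) ^ 2) ((c : ℝ) ^ 2) ≤ (4 * r + 1) / s * (1 / τ.im) := by
    have hgen : ∀ x : ℝ, (3 / 4) * x ≤ w.im / τ.im → x ≤ (4 * r + 1) / s * (1 / τ.im) := by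
      intro x hx
      have h1 : x ≤ (4 / 3) * (w.im / τ.im) := by linarith
      have h2 : (4 / 3) * (w.im / τ.im) ≤ (4 / 3) * ((r + ε) / τ.im) := by
        apply mul_le_mul_of_nonneg_left ?_ (by norm_num)
        exact (div_le_div_iff_of_pos_right hτ).mpr hwim_ub
      have h3 : (4 / 3) * ((r + ε) / τ.im) ≤ (4 * r + 1) / s * (1 / τ.im) := by
        rw [div_eq_mul_one_div (r + ε) τ.im, ← mul_assoc]
        exact mul_le_mul_of_nonneg_right hK1 (by positivity)
      linarith
    exact max_le (hgen _ ha34) (hgen _ hc34)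
  -- |cτ+d|² ≤ 4/3
  have hnD_le : Complex.normSq ((c : ℂ) * τ + (d : ℂ)) ≤ 4 / 3 := by
    by_cases hc : c = 0
    · subst hc
      have had : a * d = 1 := by simpa using hdet
      have hd1 : d = 1 ∨ d = -1 :=
        Int.eq_one_or_neg_one_of_mul_eq_one (by rw [mul_comm]; exact had)
      rcases hd1 with h | h <;> subst h <;> norm_num [Complex.normSq_apply]
    · have hc1 : (1 : ℝ) ≤ (c : ℝ) ^ 2 := by
        have h1 : (1 : ℤ) ≤ c ^ 2 := by
          rcases lt_or_gt_of_ne hc with h | h <;> nlinarith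
        exact_mod_cast h1
      have hexp : Complex.normSq ((c : ℂ) * τ + (d : ℂ))
          = ((c : ℝ) * τ.re + d) ^ 2 + ((c : ℝ) * τ.im) ^ 2 := by
        simp only [Complex.normSq_apply, Complex.add_re, Complex.add_im, Complex.mul_re,
          Complex.mul_im, Complex.intCast_re, Complex.intCast_im]
        ring
      have h2 : τ.im ^ 2 ≤ Complex.normSq ((c : ℂ) * τ + (d : ℂ)) := by
        rw [hexp]
        nlinarith [sq_nonneg ((c : ℝ) * τ.re + d), sq_nonneg τ.im]
      have h3a : w.im * τ.im ^ 2 ≤ τ.im := by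
        calc w.im * τ.im ^ 2 ≤ w.im * Complex.normSq ((c : ℂ) * τ + (d : ℂ)) :=
              mul_le_mul_of_nonneg_left h2 hwim.le
          _ = τ.im := him
      have h3 : w.im * τ.im ≤ 1 := by
        apply (mul_le_mul_iff_of_pos_right hτ).mp
        calc w.im * τ.im * τ.im = w.im * τ.im ^ 2 := by ring
          _ ≤ τ.im := h3a
          _ = 1 * τ.im := by ring
      have h4 : Complex.normSq ((c : ℂ) * τ + (d : ℂ)) * w.im ^ 2 ≤ 1 := by
        calc Complex.normSq ((c : ℂ) * τ + (d : ℂ)) * w.im ^ 2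
            = (w.im * Complex.normSq ((c : ℂ) * τ + (d : ℂ))) * w.im := by ring
          _ = τ.im * w.im := by rw [him]
          _ ≤ 1 := by linarith [h3, mul_comm τ.im w.im]
      have h5 : (3 : ℝ) / 4 ≤ w.im ^ 2 := by
        have h5a := mul_self_le_mul_self (by positivity : (0 : ℝ) ≤ s / 2) hwim_lb
        calc (3 : ℝ) / 4 = s ^ 2 / 4 := by rw [hs2]
          _ = (s / 2) * (s / 2) := by ring
          _ ≤ w.im * w.im := h5a
          _ = w.im ^ 2 := by ring
      have h6 : Complex.normSq ((c : ℂ) * τ + (d : ℂ)) * (3 / 4) ≤ 1 :=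
        le_trans (mul_le_mul_of_nonneg_left h5 hnD0.le) h4
      linarith [h6]
  have hD_abs : ‖(c : ℂ) * τ + (d : ℂ)‖ ≤ 2 / s := by
    have h1 : (‖(c : ℂ) * τ + (d : ℂ)‖) ^ 2 ≤ 4 / 3 := by
      rw [Complex.sq_norm]; exact hnD_le
    have h2 : (0 : ℝ) ≤ ‖(c : ℂ) * τ + (d : ℂ)‖ := norm_nonneg _
    have h3 : ((2 : ℝ) / s) ^ 2 = 4 / 3 := by
      rw [div_pow, hs2]; norm_num
    exact aux_sq_le h2 (by positivity) (by rw [h3]; exact h1)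
  -- bound for d
  have hd_bound : |(d : ℝ)| ≤ |(c : ℝ)| * |τ.re| + (4 * r + 1) / s := by
    have hDre : ((c : ℂ) * τ + (d : ℂ)).re = (c : ℝ) * τ.re + d := by
      simp [Complex.add_re, Complex.mul_re]
    have h1 : |((c : ℝ) * τ.re + d)| ≤ 2 / s := by
      rw [← hDre]; exact (Complex.abs_re_le_norm _).trans hD_abs
    calc |(d : ℝ)| = |((c : ℝ) * τ.re + d) - (c : ℝ) * τ.re| := by congr 1; ring
      _ ≤ |((c : ℝ) * τ.re + d)| + |(c : ℝ) * τ.re| := abs_sub _ _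
      _ ≤ 2 / s + |(c : ℝ)| * |τ.re| := by rw [abs_mul]; linarith
      _ ≤ |(c : ℝ)| * |τ.re| + (4 * r + 1) / s := by
          have : (2 : ℝ) / s ≤ (4 * r + 1) / s := (div_le_div_iff_of_pos_right hs0).mpr (by linarith)
          linarith
  -- bound for b
  have hb_bound : |(b : ℝ)| ≤ |(a : ℝ)| * |τ.re| + (4 * r + 1) / s := by
    have hwD : w * ((c : ℂ) * τ + (d : ℂ)) = (a : ℂ) * τ + (b : ℂ) := by
      rw [hw, moebius, div_mul_cancel₀ _ hcd]
    have hre : (w * ((c : ℂ) * τ + (d : ℂ))).re = (a : ℝ) * τ.re + b := by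
      rw [hwD]; simp [Complex.add_re, Complex.mul_re]
    have h1 : |((a : ℝ) * τ.re + b)|
        ≤ ‖w‖ * ‖(c : ℂ) * τ + (d : ℂ)‖ := by
      rw [← hre]
      calc |(w * ((c : ℂ) * τ + (d : ℂ))).re|
          ≤ ‖w * ((c : ℂ) * τ + (d : ℂ))‖ := Complex.abs_re_le_norm _
        _ = ‖w‖ * ‖(c : ℂ) * τ + (d : ℂ)‖ := norm_mul _ _
    have h2 : ‖w‖ * ‖(c : ℂ) * τ + (d : ℂ)‖ ≤ (r + ε) * (2 / s) := by
      apply mul_le_mul habsw_ub hD_abs (norm_nonneg _) (by positivity)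
    have h3 : (r + ε) * (2 / s) ≤ (4 * r + 1) / s := by
      have e : (r + ε) * (2 / s) = (2 * r + 2 * ε) / s := by ring
      rw [e]
      exact (div_le_div_iff_of_pos_right hs0).mpr (by linarith)
    calc |(b : ℝ)| = |((a : ℝ) * τ.re + b) - (a : ℝ) * τ.re| := by congr 1; ring
      _ ≤ |((a : ℝ) * τ.re + b)| + |(a : ℝ) * τ.re| := abs_sub _ _
      _ ≤ (4 * r + 1) / s + |(a : ℝ)| * |τ.re| := by rw [abs_mul]; linarith
      _ = |(a : ℝ)| * |τ.re| + (4 * r + 1) / s := by ring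
  -- the main estimate
  set ν : ℝ := if 0 ≤ w.re then (-1 : ℝ) else 1 with hν_def
  have hν1 : ν = 1 ∨ ν = -1 := by
    rw [hν_def]; split <;> simp
  have hνw : ν * |w.re| = -w.re := by
    rw [hν_def]; split
    · rename_i h; rw [abs_of_nonneg h]; ring
    · rename_i h; rw [abs_of_neg (lt_of_not_ge h)]; ring
  have hacK : |(a : ℝ)| * |(c : ℝ)| ≤ (4 * r + 1) / s * (1 / τ.im) := by
    exact (aux_abs_mul_le_max (a : ℝ) (c : ℝ)).trans hmaxK
  have hcK : (c : ℝ) ^ 2 ≤ (4 * r + 1) / s * (1 / τ.im) :=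
    le_trans (le_max_right _ _) hmaxK
  have hre_close : |ν * |ξ.re| + w.re| ≤ ε := by
    have he : ν * |ξ.re| + w.re = ν * (|ξ.re| - |w.re|) := by
      rw [mul_sub, hνw]; ring
    rw [he, abs_mul]
    have hν_abs : |ν| = 1 := by rcases hν1 with h | h <;> simp [h]
    rw [hν_abs, one_mul]
    calc |(|ξ.re| - |w.re|)| ≤ |ξ.re - w.re| := abs_abs_sub_abs_le_abs_sub _ _
      _ = |w.re - ξ.re| := abs_sub_comm _ _
      _ ≤ ε := hwx
  have hnsq_close : |r ^ 2 - Complex.normSq w| ≤ (2 * r + 1) * ε := by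
    have h1 : r ^ 2 - Complex.normSq w = (r - ‖w‖) * (r + ‖w‖) := by
      rw [← Complex.sq_norm]; ring
    rw [h1, abs_mul]
    have h2 : |r - ‖w‖| ≤ ε := by rw [abs_sub_comm]; exact hwa
    have h3 : |r + ‖w‖| ≤ 2 * r + 1 := by
      rw [abs_of_nonneg (by positivity)]
      linarith [habsw_ub, hε2]
    calc |r - ‖w‖| * |r + ‖w‖| ≤ ε * (2 * r + 1) :=
          mul_le_mul h2 h3 (abs_nonneg _) hε.le
      _ = (2 * r + 1) * ε := by ring
  refine ⟨⟨ν, hν1, ?_⟩, hmaxK, hd_bound, hb_bound⟩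
  have hTrw : (a : ℝ) ^ 2 + 2 * ν * |ξ.re| * ((a : ℝ) * (c : ℝ)) + r ^ 2 * (c : ℝ) ^ 2
        - ξ.im / τ.im
      = (w.im - ξ.im) / τ.im + 2 * ((a : ℝ) * (c : ℝ)) * (ν * |ξ.re| + w.re)
        + (c : ℝ) ^ 2 * (r ^ 2 - Complex.normSq w) := by
    have := hKey
    field_simp at this ⊢
    linear_combination this
  rw [hTrw]
  have t1 : |(w.im - ξ.im) / τ.im| ≤ ε / τ.im := by
    rw [abs_div, abs_of_pos hτ]
    exact (div_le_div_iff_of_pos_right hτ).mpr hwy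
  have t2 : |2 * ((a : ℝ) * (c : ℝ)) * (ν * |ξ.re| + w.re)|
      ≤ 2 * ((4 * r + 1) / s * (1 / τ.im)) * ε := by
    calc |2 * ((a : ℝ) * (c : ℝ)) * (ν * |ξ.re| + w.re)|
        = 2 * (|(a : ℝ)| * |(c : ℝ)|) * |ν * |ξ.re| + w.re| := by
          rw [abs_mul, abs_mul, abs_mul]; norm_num
      _ ≤ 2 * ((4 * r + 1) / s * (1 / τ.im)) * ε := by
          apply mul_le_mul (by linarith [hacK]) hre_close (abs_nonneg _) (by positivity)
  have t3 : |(c : ℝ) ^ 2 * (r ^ 2 - Complex.normSq w)|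
      ≤ (4 * r + 1) / s * (1 / τ.im) * ((2 * r + 1) * ε) := by
    rw [abs_mul, abs_of_nonneg (sq_nonneg (c : ℝ))]
    apply mul_le_mul hcK hnsq_close (abs_nonneg _) (by positivity)
  have hsqrtε : ε ≤ Real.sqrt ε := aux_le_sqrt_self hε.le hε2
  have hK_lb : 5 / 2 ≤ (4 * r + 1) / s := by
    rw [le_div_iff₀ hs0]
    linarith [hs_le, hr1]
  have hfinal : ε / τ.im + 2 * ((4 * r + 1) / s * (1 / τ.im)) * ε
        + (4 * r + 1) / s * (1 / τ.im) * ((2 * r + 1) * ε)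
      ≤ 7 * ((4 * r + 1) / s) * r ^ 2 * Real.sqrt ε / τ.im := by
    set K := (4 * r + 1) / s with hK_def
    have hKpos : 0 < K := by positivity
    have e : ε / τ.im + 2 * (K * (1 / τ.im)) * ε + K * (1 / τ.im) * ((2 * r + 1) * ε)
        = (ε * (1 + (2 * r + 3) * K)) / τ.im := by ring
    have e2 : 7 * K * r ^ 2 * Real.sqrt ε / τ.im
        = (Real.sqrt ε * (7 * K * r ^ 2)) / τ.im := by ring
    rw [e, e2]
    have hstep1 : ε * (1 + (2 * r + 3) * K) ≤ Real.sqrt ε * (1 + (2 * r + 3) * K) := by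
      apply mul_le_mul_of_nonneg_right hsqrtε (by positivity)
    have h7 : (2 : ℝ) * K ≤ (7 * r ^ 2 - 2 * r - 3) * K := by
      exact mul_le_mul_of_nonneg_right (aux_r_poly hr1) hKpos.le
    have hstep2 : 1 + (2 * r + 3) * K ≤ 7 * K * r ^ 2 := by
      have he7 : 2 * K ≤ 7 * K * r ^ 2 - (2 * r + 3) * K := by
        calc 2 * K ≤ (7 * r ^ 2 - 2 * r - 3) * K := h7
          _ = 7 * K * r ^ 2 - (2 * r + 3) * K := by ring
      linarith [he7, hK_lb]
    have hstep3 : Real.sqrt ε * (1 + (2 * r + 3) * K)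
        ≤ Real.sqrt ε * (7 * K * r ^ 2) := by
      apply mul_le_mul_of_nonneg_left hstep2 (Real.sqrt_nonneg _)
    exact (div_le_div_iff_of_pos_right hτ).mpr (hstep1.trans hstep3)
  have habs1 := abs_add_le ((w.im - ξ.im) / τ.im + 2 * ((a : ℝ) * (c : ℝ)) * (ν * |ξ.re| + w.re))
    ((c : ℝ) ^ 2 * (r ^ 2 - Complex.normSq w))
  have habs2 := abs_add_le ((w.im - ξ.im) / τ.im)
    (2 * ((a : ℝ) * (c : ℝ)) * (ν * |ξ.re| + w.re))
  linarith [habs1, habs2, t1, t2, t3, hfinal]
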